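/- For a tree ordinal t and x ≥ 2: N(o(t[x])) ≤ N(o(t)[x + Cr(t)]) + x + Cr(t) − 2 and o(t[x]) ≤ o(t)[x + Cr(t)], where o is the induced ordinal, [·] the respective fundamental sequences, N the norm, and Cr the ordinal correction function. -/

import Mathlib

/-- Tree ordinals as formal terms: `0`, and `ω^{t₁} + ⋯ + ω^{tₙ}` for tree
ordinals `t₁, …, tₙ` (no ordering condition on the exponents).
`oadd e r` denotes `r + ω^e`, i.e. `e` is the exponent of the **rightmost**
summand and `r` collects the summands to its left. -/
inductive T : Type where
  | zero : T
  | oadd : T → T → T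
deriving DecidableEq

namespace T

/-- The induced ordinal `o(t)` of a tree term (ordinal arithmetic, so smaller
summands may be absorbed). -/
noncomputable def o : T → Ordinal.{0}
  | zero => 0
  | oadd e r => o r + Ordinal.omega0 ^ o e

/-- The norm: `N0 = 0`, `N(ω^α + β) = 1 + Nα + Nβ`. -/
def norm : T → ℕ
  | zero => 0
  | oadd e r => 1 + norm e + norm r

/-- `rep e r x = r + ω^e · x`. -/
def rep (e r : T) : ℕ → T
  | 0 => r
  | x + 1 => oadd e (rep e r x)

/-- The standard fundamental sequences on tree terms:
`0[x] = 0`, `1[x] = 0`, `(t+1)[x] = t`, `(t + ω^{s+1})[x] = t + ω^s · x`,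
`(t + ω^λ)[x] = t + ω^{λ[x]}` for a limit term `λ`. -/
def fund : T → ℕ → T
  | zero, _ => zero
  | oadd zero r, _ => r
  | oadd (oadd zero e') r, x => rep e' r x
  | oadd (oadd (oadd a b) e') r, x => oadd (fund (oadd (oadd a b) e') x) r

/-- Auxiliary sum for the ordinal correction function: `crSum t m` adds
`N(ω^{tᵢ})` for each summand `ω^{tᵢ}` of `t` whose exponent is smaller (as an
ordinal) than some exponent strictly to its right (where `m` is the maximum of
the exponents lying to the right of all of `t`). -/
noncomputable def crSum : T → Ordinal.{0} → ℕ
  | zero, _ => 0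
  | oadd e r, m => (if o e < m then 1 + norm e else 0) + crSum r (max m (o e))

mutual
/-- The ordinal correction function `Cr`:
`Cr(0) = 0` and `Cr(t) = Σ {N(ω^{tᵢ}) : tᵢ < tⱼ for some j > i} + max Cr(tᵢ)`. -/
noncomputable def cr : T → ℕ
  | zero => 0
  | oadd e r => crSum (oadd e r) 0 + max (cr e) (crMax r)

/-- Maximum of `Cr` over the exponents of a term. -/
noncomputable def crMax : T → ℕ
  | zero => 0
  | oadd e r => max (cr e) (crMax r)
end

/-- Cantor normal form predicate: exponents are (weakly) increasing from the
rightmost summand leftwards, and all exponents are themselves in CNF.  Terms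
satisfying `NF` faithfully represent the ordinals below `ε₀`. -/
def NF : T → Prop
  | zero => True
  | oadd e r => NF e ∧ NF r ∧ (match r with | zero => True | oadd f _ => o e ≤ o f)

/-- A term is a limit iff its rightmost summand has nonzero exponent. -/
def IsLim : T → Prop
  | oadd (oadd _ _) _ => True
  | _ => False

/-- Drop rightmost summands with exponent of ordinal value `< b`
(the absorption performed by ordinal addition). -/
noncomputable def cleanup (b : Ordinal.{0}) : T → T
  | zero => zero
  | oadd f s => if o f < b then cleanup b s else oadd f s

/-- Normalization of a tree term to the Cantor normal form of its induced
ordinal: `toNF t` is `NF`, and `o (toNF t) = o t`. -/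
noncomputable def toNF : T → T
  | zero => zero
  | oadd e r => oadd (toNF e) (cleanup (o e) (toNF r))

/-- `repOne r x = r + x`. -/
def repOne (r : T) : ℕ → T
  | 0 => r
  | x + 1 => oadd zero (repOne r x)

/-- `repPair s r x = r + (ω^s + 1) · x`. -/
def repPair (s r : T) : ℕ → T
  | 0 => r
  | x + 1 => oadd zero (oadd s (repPair s r x))

/-- The worm-induced fundamental sequences `⟦·⟧` on tree terms:
`0⟦x⟧ = 0`, `(t+1)⟦x⟧ = t`, `(t+ω)⟦x⟧ = t + x`,
`(t + ω^{s+1})⟦x⟧ = t + (ω^s + 1) · x` for `s ≠ 0`, and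
`(t + ω^λ)⟦x⟧ = t + ω^{λ⟦x⟧}` for a limit term `λ`. -/
def fundW : T → ℕ → T
  | zero, _ => zero
  | oadd zero r, _ => r
  | oadd (oadd zero zero) r, x => repOne r x
  | oadd (oadd zero (oadd a b)) r, x => repPair (oadd a b) r x
  | oadd (oadd (oadd a b) e') r, x => oadd (fundW (oadd (oadd a b) e') x) r

end T

/-- Graph of the Hardy functions (with the standard fundamental sequences):
`H_0(x) = x`, `H_{t+1}(x) = H_t(x+1)`, `H_t(x) = H_{t[x]}(x)` for limit `t`.
`HG t x y` means `H_t(x)` is defined with value `y`. -/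
inductive HG : T → ℕ → ℕ → Prop where
  | zero (x) : HG T.zero x x
  | succ {r x y} : HG r (x + 1) y → HG (T.oadd T.zero r) x y
  | lim {e r x y} (he : e ≠ T.zero) :
      HG (T.fund (T.oadd e r) x) x y → HG (T.oadd e r) x y

namespace T
open Ordinal

private theorem wopow_lt {a b : Ordinal} (h : a < b) : omega0 ^ a < omega0 ^ b :=
  (opow_lt_opow_iff_right one_lt_omega0).2 h

private theorem wopow_le {a b : Ordinal} (h : a ≤ b) : omega0 ^ a ≤ omega0 ^ b :=
  opow_le_opow_right omega0_pos h

theorem o_cleanup_add (b : Ordinal) (s : T) :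
    o (cleanup b s) + omega0 ^ b = o s + omega0 ^ b := by
  induction s with
  | zero => rfl
  | oadd f s _ ih =>
    rw [cleanup]
    split
    · next h => rw [ih, o, add_assoc, Ordinal.add_absorp (wopow_lt h) le_rfl]
    · rfl

theorem o_toNF (t : T) : o (toNF t) = o t := by
  induction t with
  | zero => rfl
  | oadd e r ihe ihr =>
    rw [toNF, o, o, ihe, o_cleanup_add, ihr]

theorem cleanup_zero_eq (s : T) : cleanup 0 s = s := by
  induction s with
  | zero => rfl
  | oadd f s ih => rw [cleanup, if_neg (not_lt_of_ge zero_le)]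

theorem cleanup_cleanup {b' b : Ordinal} (h : b' ≤ b) (s : T) :
    cleanup b (cleanup b' s) = cleanup b s := by
  induction s with
  | zero => rfl
  | oadd f s _ ih =>
    by_cases hf : o f < b'
    · rw [cleanup, if_pos hf, ih, cleanup, if_pos (hf.trans_le h)]
    · rw [cleanup, if_neg hf]

theorem le_of_cleanup_eq {b : Ordinal} {f s' : T} :
    ∀ {s : T}, cleanup b s = oadd f s' → b ≤ o f := by
  intro s
  induction s with
  | zero => intro h; exact absurd h (by rw [cleanup]; exact fun h => T.noConfusion h)
  | oadd g s _ ih =>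
    rw [cleanup]
    split
    · exact ih
    · next hg => intro h; cases h; exact not_lt.1 hg

theorem nf_cleanup {s : T} (b : Ordinal) (h : NF s) : NF (cleanup b s) := by
  induction s with
  | zero => exact h
  | oadd f s _ ih =>
    rw [cleanup]; split
    · exact ih h.2.1
    · exact h

theorem nf_toNF (t : T) : NF (toNF t) := by
  induction t with
  | zero => trivial
  | oadd e r ihe ihr =>
    rw [toNF]
    refine ⟨ihe, nf_cleanup _ ihr, ?_⟩
    rcases hc : cleanup (o e) (toNF r) with _ | ⟨f, s'⟩
    · trivial
    · show o (toNF e) ≤ o f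
      rw [o_toNF]; exact le_of_cleanup_eq hc

theorem norm_cleanup_le (b : Ordinal) (s : T) : norm (cleanup b s) ≤ norm s := by
  induction s with
  | zero => exact le_rfl
  | oadd f s _ ih =>
    rw [cleanup]; split
    · exact ih.trans (by simp [norm])
    · exact le_rfl

theorem norm_toNF_le (t : T) : norm (toNF t) ≤ norm t := by
  induction t with
  | zero => exact le_rfl
  | oadd e r ihe ihr =>
    rw [toNF, norm, norm]
    have := (norm_cleanup_le (o e) (toNF r)).trans ihr
    omega

theorem norm_cleanup_cleanup_le {b' b : Ordinal} (h : b' ≤ b) (r : T) :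
    norm (cleanup b' (toNF r)) ≤ norm (cleanup b (toNF r)) + crSum r b := by
  induction r generalizing b' b with
  | zero => simp [toNF, cleanup, crSum]
  | oadd f r _ ih =>
    rw [toNF, crSum]
    by_cases h1 : o f < b'
    · have h2 : o f < b := h1.trans_le h
      rw [cleanup, if_pos (by rw [o_toNF]; exact h1),
        cleanup, if_pos (by rw [o_toNF]; exact h2),
        cleanup_cleanup h1.le, cleanup_cleanup h2.le,
        if_pos h2, max_eq_left h2.le]
      have := ih h
      omega
    · by_cases h2 : o f < b
      · rw [cleanup, if_neg (by rw [o_toNF]; exact h1),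
          cleanup, if_pos (by rw [o_toNF]; exact h2),
          cleanup_cleanup h2.le, if_pos h2, max_eq_left h2.le]
        have h3 : norm (cleanup (o f) (toNF r)) ≤ norm (cleanup b (toNF r)) + crSum r b :=
          ih h2.le
        have h4 := norm_toNF_le f
        simp only [norm]
        omega
      · rw [cleanup, if_neg (by rw [o_toNF]; exact h1),
          cleanup, if_neg (by rw [o_toNF]; exact h2)]
        omega

theorem o_toNF_le_cleanup {b q : Ordinal} (hq : ∀ f : T, o f < b → omega0 ^ o f ≤ q) (r : T) :
    o (toNF r) ≤ o (cleanup b (toNF r)) + q * (crSum r b : ℕ) := by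
  induction r with
  | zero => simp [toNF, cleanup, crSum, o]
  | oadd f r _ ih =>
    rw [toNF, crSum]
    by_cases h1 : o f < b
    · rw [cleanup, if_pos (by rw [o_toNF]; exact h1), cleanup_cleanup h1.le,
        if_pos h1, max_eq_left h1.le, o, o_toNF, o_cleanup_add]
      calc o (toNF r) + omega0 ^ o f
          ≤ (o (cleanup b (toNF r)) + q * (crSum r b : ℕ)) + q :=
            add_le_add ih (hq f h1)
        _ = o (cleanup b (toNF r)) + q * ((crSum r b : ℕ) + 1) := by
            rw [mul_add, mul_one, add_assoc]
        _ ≤ o (cleanup b (toNF r)) + q * ((1 + norm f + crSum r b : ℕ) : Ordinal) := by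
            refine add_le_add_right (mul_le_mul_right ?_ q) _
            rw [← Nat.cast_add_one, Nat.cast_le]
            omega
    · rw [cleanup, if_neg (by rw [o_toNF]; exact h1)]
      exact le_self_add

theorem o_toNF_add_eq {b P : Ordinal} (r : T)
    (h : ∀ f : T, o f < b → 1 + norm f ≤ crSum r b → omega0 ^ o f + P = P) :
    o (toNF r) + P = o (cleanup b (toNF r)) + P := by
  induction r with
  | zero => rfl
  | oadd f r _ ih =>
    rw [toNF]
    by_cases h1 : o f < b
    · have hcr : crSum (oadd f r) b = (1 + norm f) + crSum r b := by
        rw [crSum, if_pos h1, max_eq_left h1.le]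
      rw [cleanup, if_pos (by rw [o_toNF]; exact h1), cleanup_cleanup h1.le,
        o, o_toNF, o_cleanup_add]
      have habs : omega0 ^ o f + P = P := h f h1 (by rw [hcr]; omega)
      rw [add_assoc, habs]
      exact ih fun f' hf' hn => h f' hf' (by rw [hcr]; omega)
    · rw [cleanup, if_neg (by rw [o_toNF]; exact h1)]

theorem o_rep (e r : T) (z : ℕ) : o (rep e r z) = o r + omega0 ^ o e * z := by
  induction z with
  | zero => simp [rep]
  | succ z ih =>
    rw [rep, o, ih, Nat.cast_add_one, mul_add, mul_one, add_assoc]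

theorem norm_rep (e r : T) (z : ℕ) : norm (rep e r z) = z * (1 + norm e) + norm r := by
  induction z with
  | zero => simp [rep]
  | succ z ih => rw [rep, norm, ih]; ring

theorem toNF_rep (e r : T) (z : ℕ) :
    toNF (rep e r (z + 1)) = rep (toNF e) (cleanup (o e) (toNF r)) (z + 1) := by
  induction z with
  | zero => rw [rep, rep, toNF]; rfl
  | succ z ih =>
    rw [rep, toNF, ih, rep, cleanup, if_neg (by rw [o_toNF]; exact lt_irrefl _)]
    rfl

theorem o_fund_le (t : T) (x : ℕ) : o (fund t x) ≤ o t := by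
  induction t, x using fund.induct with
  | case1 x => exact le_rfl
  | case2 r x => rw [fund, o]; exact le_self_add
  | case3 e' r x =>
    rw [fund, o_rep, o, o, o, opow_zero]
    refine add_le_add_right ?_ _
    calc omega0 ^ o e' * (x : ℕ) ≤ omega0 ^ o e' * omega0 :=
          mul_le_mul_right (nat_lt_omega0 x).le _
      _ = omega0 ^ (o e' + 1) := by rw [add_one_eq_succ, opow_succ]
  | case4 a b e' r x ih =>
    rw [fund, o, o]
    exact add_le_add_right (wopow_le ih) _

theorem norm_fund_mono (t : T) (x z : ℕ) (hxz : x ≤ z) :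
    norm (fund t x) ≤ norm (fund t z) := by
  induction t, x using fund.induct generalizing z with
  | case1 x => exact le_rfl
  | case2 r x => exact le_rfl
  | case3 e' r x =>
    rw [fund, fund, norm_rep, norm_rep]
    have : x * (1 + norm e') ≤ z * (1 + norm e') := Nat.mul_le_mul_right _ hxz
    omega
  | case4 a b e' r x ih =>
    rw [fund, fund, norm, norm]
    have := ih z hxz
    omega

theorem o_fund_mono (t : T) (x z : ℕ) (hxz : x ≤ z) :
    o (fund t x) ≤ o (fund t z) := by
  induction t, x using fund.induct generalizing z with
  | case1 x => exact le_rfl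
  | case2 r x => exact le_rfl
  | case3 e' r x =>
    rw [fund, fund, o_rep, o_rep]
    exact add_le_add_right (mul_le_mul_right (by exact_mod_cast hxz) _) _
  | case4 a b e' r x ih =>
    rw [fund, fund, o, o]
    exact add_le_add_right (wopow_le (ih z hxz)) _

theorem o_fund_strict (t : T) (hl : IsLim t) (x z : ℕ) (hxz : x < z) :
    o (fund t x) < o (fund t z) := by
  induction t, x using fund.induct generalizing z with
  | case1 x => exact hl.elim
  | case2 r x => exact hl.elim
  | case3 e' r x =>
    rw [fund, fund, o_rep, o_rep]
    refine add_lt_add_right ?_ _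
    exact (mul_lt_mul_iff_right₀ (opow_pos _ omega0_pos)).2 (by exact_mod_cast hxz)
  | case4 a b e' r x ih =>
    rw [fund, fund, o, o]
    exact add_lt_add_right (wopow_lt (ih trivial z hxz)) _

theorem opow_dvd_o {b : Ordinal} :
    ∀ g : T, NF g → (∀ f s, g = oadd f s → b ≤ o f) → omega0 ^ b ∣ o g := by
  intro g
  induction g with
  | zero => intro _ _; exact dvd_zero _
  | oadd f s _ ih =>
    intro hnf h
    rw [o]
    refine dvd_add (ih hnf.2.1 ?_) (opow_dvd_opow _ (h f s rfl))
    rintro f' s' rfl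
    exact (h f (oadd f' s') rfl).trans hnf.2.2

theorem isLimit_o (t : T) (hl : IsLim t) : Order.IsSuccLimit (o t) := by
  rcases t with _ | ⟨(_ | ⟨a, b⟩), r⟩
  · exact hl.elim
  · exact hl.elim
  · rw [o]
    refine isSuccLimit_add _ (isSuccLimit_opow_left isSuccLimit_omega0 ?_)
    rw [o]
    have hpos : (0 : Ordinal) < o (oadd a b) := by
      rw [o]
      exact (opow_pos _ omega0_pos).trans_le (le_add_self)
    exact hpos.ne'

/-- Size measure for induction. -/
def sz : T → ℕ
  | zero => 0
  | oadd e r => sz e + sz r + 1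

theorem o_oadd_zero (e' : T) : o (oadd zero e') = o e' + 1 := by
  rw [o]; show o e' + omega0 ^ (0 : Ordinal) = _; rw [opow_zero]

theorem np : ∀ (n : ℕ) (t : T), sz t ≤ n → IsLim t → NF t →
    ∀ (g : T) (x : ℕ), NF g → o g < o t → norm g ≤ x → o g ≤ o (fund t x) := by
  intro n
  induction n with
  | zero =>
    intro t hsz hl
    rcases t with _ | ⟨e, r⟩
    · exact fun _ _ _ _ _ _ => hl.elim
    · simp [sz] at hsz
  | succ n ihn =>
    intro t hsz hl hnf g
    rcases t with _ | ⟨(_ | ⟨(_ | ⟨a, b⟩), e'⟩), r⟩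
    · exact fun _ _ _ _ => hl.elim
    · exact fun _ _ _ _ => hl.elim
    · -- successor exponent case
      have hot : o (oadd (oadd zero e') r) = o r + omega0 ^ (o e' + 1) := by
        rw [o, o_oadd_zero]
      induction g with
      | zero => intro x _ _ _; exact zero_le
      | oadd f g' _ ihg =>
        intro x hng hlt hx
        rw [fund, o_rep]
        by_cases hof : o e' < o f
        · have hd1 : omega0 ^ (o e' + 1) ∣ o (oadd f g') := by
            refine opow_dvd_o _ hng ?_
            intro f'' s'' h''
            obtain ⟨rfl, rfl⟩ := T.oadd.inj h''.symm
            rw [add_one_eq_succ]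
            exact Order.succ_le_of_lt hof
          have hd2 : omega0 ^ (o e' + 1) ∣ o r := by
            refine opow_dvd_o _ hnf.2.1 ?_
            rintro f'' s'' rfl
            have h2 := hnf.2.2
            rwa [o_oadd_zero] at h2
          obtain ⟨p, hp⟩ := hd2
          obtain ⟨q, hq⟩ := hd1
          have hqp : o (oadd f g') ≤ o r := by
            rw [hp, hq]
            refine mul_le_mul_right ?_ _
            have hlt' : omega0 ^ (o e' + 1) * q < omega0 ^ (o e' + 1) * (p + 1) := by
              rw [mul_add, mul_one, ← hp, ← hq, ← hot]
              exact hlt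
            have h3 := (mul_lt_mul_iff_right₀ (opow_pos _ omega0_pos)).1 hlt'
            rw [add_one_eq_succ] at h3
            exact Order.lt_succ_iff.mp h3
          exact hqp.trans (le_self_add)
        · have hxn : norm (oadd f g') = 1 + norm f + norm g' := by rw [norm]
          have hx1 : 1 ≤ x := by omega
          have hg' : o g' ≤ o (fund (oadd (oadd zero e') r) (x - 1)) := by
            refine ihg (x - 1) hng.2.1 ?_ (by omega)
            exact lt_of_le_of_lt (by rw [o]; exact le_self_add) hlt
          rw [fund, o_rep] at hg'
          calc o (oadd f g') = o g' + omega0 ^ o f := by rw [o]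
            _ ≤ (o r + omega0 ^ o e' * ((x - 1 : ℕ) : Ordinal)) + omega0 ^ o e' :=
                add_le_add hg' (wopow_le (not_lt.1 hof))
            _ = o r + omega0 ^ o e' * (((x - 1 : ℕ) : Ordinal) + 1) := by
                rw [mul_add, mul_one, add_assoc]
            _ = o r + omega0 ^ o e' * (x : ℕ) := by
                rw [← Nat.cast_add_one]
                have h9 : x - 1 + 1 = x := by omega
                rw [h9]
    · -- limit exponent case
      have hszl : sz (oadd (oadd a b) e') ≤ n := by simp [sz] at hsz ⊢; omega
      have hot : o (oadd (oadd (oadd a b) e') r) =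
          o r + omega0 ^ o (oadd (oadd a b) e') := by rw [o]
      induction g with
      | zero => intro x _ _ _; exact zero_le
      | oadd f g' _ ihg =>
        intro x hng hlt hx
        rw [fund, o]
        by_cases hof : o f < o (oadd (oadd a b) e')
        · have hxn : norm (oadd f g') = 1 + norm f + norm g' := by rw [norm]
          have hx1 : 1 ≤ x := by omega
          have hβ : o f + 1 ≤ o (fund (oadd (oadd a b) e') x) := by
            have hnn : norm (oadd zero f) = 1 + norm f := by rw [norm, norm]
            have h5 := ihn (oadd (oadd a b) e') hszl trivial hnf.1 (oadd zero f) x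
              ⟨trivial, hng.1, ?_⟩ ?_ ?_
            · rwa [o_oadd_zero] at h5
            · rcases f with _ | ⟨q, s⟩
              · trivial
              · exact zero_le
            · rw [o_oadd_zero, add_one_eq_succ]
              exact (isLimit_o (oadd (oadd a b) e') trivial).succ_lt hof
            · omega
          have hg' : o g' ≤ o (fund (oadd (oadd (oadd a b) e') r) (x - 1)) := by
            refine ihg (x - 1) hng.2.1 ?_ (by omega)
            exact lt_of_le_of_lt (by rw [o]; exact le_self_add) hlt
          rw [fund, o] at hg'
          have hmono : o (fund (oadd (oadd a b) e') (x - 1)) < o (fund (oadd (oadd a b) e') x) :=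
            o_fund_strict (oadd (oadd a b) e') trivial _ _ (by omega)
          set β₂ := o (fund (oadd (oadd a b) e') x) with hβ₂
          set β₂' := o (fund (oadd (oadd a b) e') (x - 1)) with hβ₂'
          have hm : max β₂' (o f) + 1 ≤ β₂ := by
            rw [add_one_eq_succ]
            exact Order.succ_le_of_lt (max_lt hmono (lt_of_lt_of_le (lt_add_one _) hβ))
          have hsum : omega0 ^ β₂' + omega0 ^ o f ≤ omega0 ^ β₂ := by
            calc omega0 ^ β₂' + omega0 ^ o f
                ≤ omega0 ^ max β₂' (o f) + omega0 ^ max β₂' (o f) :=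
                  add_le_add (wopow_le (le_max_left _ _)) (wopow_le (le_max_right _ _))
              _ = omega0 ^ max β₂' (o f) * 2 := by
                  rw [← one_add_one_eq_two, mul_add, mul_one]
              _ ≤ omega0 ^ max β₂' (o f) * omega0 := by
                  refine mul_le_mul_right ?_ _
                  have h6 := (nat_lt_omega0 2).le
                  simpa using h6
              _ = omega0 ^ (max β₂' (o f) + 1) := by rw [add_one_eq_succ, opow_succ]
              _ ≤ omega0 ^ β₂ := wopow_le hm
          calc o (oadd f g') = o g' + omega0 ^ o f := by rw [o]
            _ ≤ (o r + omega0 ^ β₂') + omega0 ^ o f := add_le_add_left hg' _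
            _ = o r + (omega0 ^ β₂' + omega0 ^ o f) := by rw [add_assoc]
            _ ≤ o r + omega0 ^ β₂ := add_le_add_right hsum _
        · have hd1 : omega0 ^ o (oadd (oadd a b) e') ∣ o (oadd f g') := by
            refine opow_dvd_o _ hng ?_
            intro f'' s'' h''
            obtain ⟨rfl, rfl⟩ := T.oadd.inj h''.symm
            exact not_lt.1 hof
          have hd2 : omega0 ^ o (oadd (oadd a b) e') ∣ o r := by
            refine opow_dvd_o _ hnf.2.1 ?_
            rintro f'' s'' rfl
            exact hnf.2.2
          obtain ⟨p, hp⟩ := hd2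
          obtain ⟨q, hq⟩ := hd1
          have hqp : o (oadd f g') ≤ o r := by
            rw [hp, hq]
            refine mul_le_mul_right ?_ _
            have hlt' : omega0 ^ o (oadd (oadd a b) e') * q <
                omega0 ^ o (oadd (oadd a b) e') * (p + 1) := by
              rw [mul_add, mul_one, ← hp, ← hq, ← hot]
              exact hlt
            have h3 := (mul_lt_mul_iff_right₀ (opow_pos _ omega0_pos)).1 hlt'
            rw [add_one_eq_succ] at h3
            exact Order.lt_succ_iff.mp h3
          exact hqp.trans (le_self_add)

theorem toNF_oadd_zero (e' : T) : toNF (oadd zero e') = oadd zero (toNF e') := by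
  rw [toNF, toNF, show o zero = (0 : Ordinal) from rfl, cleanup_zero_eq]

theorem toNF_succ (e' r : T) :
    toNF (oadd (oadd zero e') r) =
      oadd (oadd zero (toNF e')) (cleanup (o e' + 1) (toNF r)) := by
  rw [toNF, toNF_oadd_zero, o_oadd_zero]

end T

open T Ordinal

/-- For a tree ordinal `t` and `x ≥ 2`:
`N(o(t[x])) ≤ N(o(t)[x + Cr(t)]) + x + Cr(t) − 2` and
`o(t[x]) ≤ o(t)[x + Cr(t)]`.  Here the norm and fundamental sequence of the
induced ordinal are computed on its Cantor normal form `toNF t`. -/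
theorem norm_o_fund_step (t : T) (x : ℕ) (hx : 2 ≤ x) :
    T.norm (T.toNF (T.fund t x)) + 2 ≤
      T.norm (T.fund (T.toNF t) (x + T.cr t)) + x + T.cr t ∧
    T.o (T.fund t x) ≤ T.o (T.fund (T.toNF t) (x + T.cr t)) := by
  revert hx
  induction t, x using T.fund.induct with
  | case1 x =>
    intro hx
    constructor
    · show norm (toNF (fund zero x)) + 2 ≤ norm (fund (toNF zero) (x + cr zero)) + x + cr zero
      rw [fund, toNF, fund, T.norm]
      omega
    · exact le_rfl
  | case2 r x =>
    intro hx
    have h1 : fund (oadd zero r) x = r := by rw [fund]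
    have h2 : fund (toNF (oadd zero r)) (x + cr (oadd zero r)) = toNF r := by
      rw [toNF_oadd_zero, fund]
    rw [h1, h2]
    constructor
    · have := norm_toNF_le (toNF r)
      omega
    · rw [o_toNF]
  | case3 e' r x =>
    intro hx
    set c := cr (oadd (oadd zero e') r) with hcdef
    have hc : c = crSum r (o e' + 1) + max (cr (oadd zero e')) (crMax r) := by
      rw [hcdef, cr, crSum, if_neg (not_lt_of_ge zero_le),
        max_eq_right (zero_le), o_oadd_zero, zero_add]
    have hx1 : x - 1 + 1 = x := by omega
    have h1 : toNF (fund (oadd (oadd zero e') r) x) =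
        rep (toNF e') (cleanup (o e') (toNF r)) x := by
      rw [fund, ← hx1, toNF_rep]
    have h2 : fund (toNF (oadd (oadd zero e') r)) (x + c) =
        rep (toNF e') (cleanup (o e' + 1) (toNF r)) (x + c) := by
      rw [toNF_succ, fund]
    have hAc : crSum r (o e' + 1) ≤ c := by
      have := Nat.le_max_left (cr (oadd zero e')) (crMax r)
      omega
    constructor
    · rw [h1, h2, norm_rep, norm_rep]
      have h3 : norm (cleanup (o e') (toNF r)) ≤
          norm (cleanup (o e' + 1) (toNF r)) + crSum r (o e' + 1) :=
        norm_cleanup_cleanup_le (le_self_add) r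
      have h4 : (x + c) * (1 + norm (toNF e')) =
          x * (1 + norm (toNF e')) + c * (1 + norm (toNF e')) := Nat.add_mul _ _ _
      have h5 : c ≤ c * (1 + norm (toNF e')) := by
        have := Nat.mul_le_mul_left c (show 1 ≤ 1 + norm (toNF e') by omega)
        simpa using this
      omega
    · rw [fund, h2, o_rep, o_rep, o_toNF]
      have hq : ∀ f : T, o f < o e' + 1 → omega0 ^ o f ≤ omega0 ^ o e' := by
        intro f hf
        rw [add_one_eq_succ] at hf
        exact wopow_le (Order.lt_succ_iff.mp hf)
      calc o r + omega0 ^ o e' * (x : ℕ)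
          = o (toNF r) + omega0 ^ o e' * (x : ℕ) := by rw [o_toNF]
        _ ≤ (o (cleanup (o e' + 1) (toNF r)) + omega0 ^ o e' * (crSum r (o e' + 1) : ℕ))
              + omega0 ^ o e' * (x : ℕ) :=
            add_le_add_left (o_toNF_le_cleanup hq r) _
        _ = o (cleanup (o e' + 1) (toNF r))
              + omega0 ^ o e' * ((crSum r (o e' + 1) : ℕ) + (x : ℕ)) := by
            rw [add_assoc, mul_add]
        _ ≤ o (cleanup (o e' + 1) (toNF r)) + omega0 ^ o e' * ((x + c : ℕ) : Ordinal) := by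
            refine add_le_add_right (mul_le_mul_right ?_ _) _
            rw [← Nat.cast_add, Nat.cast_le]
            omega
  | case4 a b e' r x ih =>
    intro hx
    obtain ⟨ih1, ih2⟩ := ih hx
    set c := cr (oadd (oadd (oadd a b) e') r) with hcdef
    have hlim : IsLim (oadd (oadd a b) e') := trivial
    have h1 : toNF (oadd (oadd a b) e') =
        oadd (oadd (toNF a) (cleanup (o a) (toNF b))) (cleanup (o (oadd a b)) (toNF e')) := by
      rw [toNF, toNF]
    have h2 : toNF (oadd (oadd (oadd a b) e') r) =
        oadd (toNF (oadd (oadd a b) e')) (cleanup (o (oadd (oadd a b) e')) (toNF r)) := by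
      rw [toNF]
    have h3 : fund (toNF (oadd (oadd (oadd a b) e') r)) (x + c) =
        oadd (fund (toNF (oadd (oadd a b) e')) (x + c))
          (cleanup (o (oadd (oadd a b) e')) (toNF r)) := by
      rw [h2, h1, fund, ← h1]
    have hlimΛ : IsLim (toNF (oadd (oadd a b) e')) := by rw [h1]; trivial
    have hc : c = crSum r (o (oadd (oadd a b) e'))
        + max (cr (oadd (oadd a b) e')) (crMax r) := by
      rw [hcdef, cr, crSum, if_neg (not_lt_of_ge zero_le),
        max_eq_right (zero_le), zero_add]
    have hclc : cr (oadd (oadd a b) e') ≤ c := by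
      have := Nat.le_max_left (cr (oadd (oadd a b) e')) (crMax r)
      omega
    constructor
    · have h6 : toNF (fund (oadd (oadd (oadd a b) e') r) x) =
          oadd (toNF (fund (oadd (oadd a b) e') x))
            (cleanup (o (fund (oadd (oadd a b) e') x)) (toNF r)) := by
        rw [fund, toNF]
      rw [h6, h3, T.norm, T.norm]
      have h7 : norm (cleanup (o (fund (oadd (oadd a b) e') x)) (toNF r)) ≤
          norm (cleanup (o (oadd (oadd a b) e')) (toNF r))
            + crSum r (o (oadd (oadd a b) e')) :=
        norm_cleanup_cleanup_le (o_fund_le _ x) r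
      have h8 : norm (fund (toNF (oadd (oadd a b) e')) (x + cr (oadd (oadd a b) e'))) ≤
          norm (fund (toNF (oadd (oadd a b) e')) (x + c)) :=
        norm_fund_mono _ _ _ (by omega)
      omega
    · have hββ : o (fund (oadd (oadd a b) e') x) ≤
          o (fund (toNF (oadd (oadd a b) e')) (x + c)) :=
        ih2.trans (o_fund_mono _ _ _ (by omega))
      have habs : ∀ f : T, o f < o (oadd (oadd a b) e') →
          1 + norm f ≤ crSum r (o (oadd (oadd a b) e')) →
          omega0 ^ o f + omega0 ^ o (fund (toNF (oadd (oadd a b) e')) (x + c))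
            = omega0 ^ o (fund (toNF (oadd (oadd a b) e')) (x + c)) := by
        intro f hfo hfn
        have hnn : norm (oadd zero (toNF f)) = 1 + norm (toNF f) := by rw [T.norm, T.norm]
        have hfβ : o f + 1 ≤ o (fund (toNF (oadd (oadd a b) e')) (x + c)) := by
          have h9 := np (sz (toNF (oadd (oadd a b) e'))) (toNF (oadd (oadd a b) e')) le_rfl
            hlimΛ (nf_toNF _) (oadd zero (toNF f)) (x + c) ?_ ?_ ?_
          · rwa [o_oadd_zero, o_toNF] at h9
          · refine ⟨trivial, nf_toNF f, ?_⟩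
            rcases toNF f with _ | ⟨q, s⟩
            · trivial
            · exact zero_le
          · rw [o_oadd_zero, o_toNF, o_toNF, add_one_eq_succ]
            exact (isLimit_o (oadd (oadd a b) e') hlim).succ_lt hfo
          · have := norm_toNF_le f
            omega
        exact Ordinal.add_absorp (wopow_lt (lt_of_lt_of_le (lt_add_one _) hfβ)) le_rfl
      rw [fund, o, h3, o]
      calc o r + omega0 ^ o (fund (oadd (oadd a b) e') x)
          = o (toNF r) + omega0 ^ o (fund (oadd (oadd a b) e') x) := by rw [o_toNF]
        _ ≤ o (toNF r) + omega0 ^ o (fund (toNF (oadd (oadd a b) e')) (x + c)) :=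
            add_le_add_right (wopow_le hββ) _
        _ = o (cleanup (o (oadd (oadd a b) e')) (toNF r))
              + omega0 ^ o (fund (toNF (oadd (oadd a b) e')) (x + c)) :=
            o_toNF_add_eq r habs
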